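/- Let Ŝ^β = inf_{0<r<a} ( Lr/2 + ∫₀^{L−r} √(ρ²/4 + β^{−2}(v₀(ρ)−v₀^min)) dρ + ∫₀^r √(ρ²/4 + β^{−2}(v₀(ρ)−v₀^min)) dρ ). Then lim_{β→0⁺} β·Ŝ^β = 2∫₀^a √(v₀(ρ)−v₀^min) dρ + (L−2a)√(|v₀^min|) = 2∫₀^{L/2} √(v₀(ρ)−v₀^min) dρ. -/

import Mathlib

open Real Set Filter intervalIntegral

private lemma sqrt_add_le'' (x y : ℝ) (hx : 0 ≤ x) (hy : 0 ≤ y) :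
    Real.sqrt (x + y) ≤ Real.sqrt x + Real.sqrt y := by
  have h : x + y ≤ (Real.sqrt x + Real.sqrt y)^2 := by
    nlinarith [Real.sq_sqrt hx, Real.sq_sqrt hy, Real.sqrt_nonneg x, Real.sqrt_nonneg y]
  calc Real.sqrt (x+y) ≤ Real.sqrt ((Real.sqrt x + Real.sqrt y)^2) := Real.sqrt_le_sqrt h
    _ = _ := Real.sqrt_sq (by positivity)

theorem stmt18 (v₀ : ℝ → ℝ) (vmin : ℝ) (a L : ℝ)
    (hcont : Continuous v₀)
    (hneg : ∀ r ≥ (0:ℝ), v₀ r ≤ 0)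
    (hmin : ∀ r ≥ (0:ℝ), vmin ≤ v₀ r) (hvmin : vmin < 0)
    (hsupp : ∀ r ≥ a, v₀ r = 0)
    (ha : 0 < a) (hL : 2 * a < L)
    (Sβ : ℝ → ℝ)
    (hSβ : ∀ β, Sβ β = sInf {x : ℝ | ∃ r ∈ Set.Ioo (0:ℝ) a,
      x = L * r / 2 +
        (∫ ρ in (0:ℝ)..(L - r), Real.sqrt (ρ ^ 2 / 4 + β⁻¹ ^ 2 * (v₀ ρ - vmin))) +
        (∫ ρ in (0:ℝ)..r, Real.sqrt (ρ ^ 2 / 4 + β⁻¹ ^ 2 * (v₀ ρ - vmin)))}) :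
    Filter.Tendsto (fun β => β * Sβ β) (nhdsWithin 0 (Set.Ioi 0))
      (nhds (2 * (∫ ρ in (0:ℝ)..a, Real.sqrt (v₀ ρ - vmin)) +
        (L - 2 * a) * Real.sqrt |vmin|)) ∧
    2 * (∫ ρ in (0:ℝ)..a, Real.sqrt (v₀ ρ - vmin)) + (L - 2 * a) * Real.sqrt |vmin| =
      2 * ∫ ρ in (0:ℝ)..(L / 2), Real.sqrt (v₀ ρ - vmin) := by
  have habs : |vmin| = -vmin := abs_of_neg hvmin
  have hM : (0:ℝ) < -vmin := by linarith
  have hL0 : 0 < L := by linarith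
  set M : ℝ := Real.sqrt (-vmin) with hMdef
  have hM0 : 0 ≤ M := Real.sqrt_nonneg _
  set T : ℝ := 2 * (∫ ρ in (0:ℝ)..a, Real.sqrt (v₀ ρ - vmin)) + (L - 2 * a) * Real.sqrt |vmin|
    with hT
  -- continuity / integrability
  have hwc : Continuous fun ρ => Real.sqrt (v₀ ρ - vmin) := (hcont.sub continuous_const).sqrt
  have hwint : ∀ b₁ b₂ : ℝ, IntervalIntegrable (fun ρ => Real.sqrt (v₀ ρ - vmin))
      MeasureTheory.volume b₁ b₂ := fun b₁ b₂ => hwc.intervalIntegrable b₁ b₂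
  have hgc : ∀ β : ℝ, Continuous fun ρ => Real.sqrt (β ^ 2 * ρ ^ 2 / 4 + (v₀ ρ - vmin)) :=
    fun β => (((continuous_const.mul (continuous_id.pow 2)).div_const 4).add
      (hcont.sub continuous_const)).sqrt
  -- constant integral on [a,b]
  have hconst : ∀ b : ℝ, a ≤ b →
      (∫ ρ in a..b, Real.sqrt (v₀ ρ - vmin)) = (b - a) * M := by
    intro b hb
    rw [intervalIntegral.integral_congr (g := fun _ => M)
      (by
        intro ρ hρ
        rw [Set.uIcc_of_le hb] at hρ
        show Real.sqrt (v₀ ρ - vmin) = M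
        rw [hsupp ρ hρ.1, zero_sub])]
    simp [smul_eq_mul, mul_comm]
  -- bound on [r,a]
  have hbound : ∀ r : ℝ, 0 ≤ r → r ≤ a →
      (∫ ρ in r..a, Real.sqrt (v₀ ρ - vmin)) ≤ (a - r) * M := by
    intro r hr0 hra
    calc (∫ ρ in r..a, Real.sqrt (v₀ ρ - vmin)) ≤ ∫ _ρ in r..a, M := by
          apply intervalIntegral.integral_mono_on hra (hwint r a)
            (intervalIntegrable_const)
          intro ρ hρ
          exact Real.sqrt_le_sqrt (by linarith [hneg ρ (le_trans hr0 hρ.1)])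
      _ = (a - r) * M := by simp [smul_eq_mul, mul_comm]
  have hnn : ∀ r : ℝ, 0 ≤ ∫ ρ in r..a, Real.sqrt (v₀ ρ - vmin) → True := fun _ _ => trivial
  -- split integrals: key sum bounds
  have hsum : ∀ r ∈ Set.Ioo (0:ℝ) a,
      T ≤ (∫ ρ in (0:ℝ)..(L - r), Real.sqrt (v₀ ρ - vmin)) +
          (∫ ρ in (0:ℝ)..r, Real.sqrt (v₀ ρ - vmin)) ∧
      (∫ ρ in (0:ℝ)..(L - r), Real.sqrt (v₀ ρ - vmin)) +
          (∫ ρ in (0:ℝ)..r, Real.sqrt (v₀ ρ - vmin)) ≤ T + (a - r) * M := by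
    intro r hr
    obtain ⟨hr0, hra⟩ := hr
    have haLr : a ≤ L - r := by linarith
    have h1 : (∫ ρ in (0:ℝ)..(L - r), Real.sqrt (v₀ ρ - vmin)) =
        (∫ ρ in (0:ℝ)..a, Real.sqrt (v₀ ρ - vmin)) + (L - r - a) * M := by
      rw [← intervalIntegral.integral_add_adjacent_intervals (hwint 0 a) (hwint a (L - r)),
        hconst (L - r) haLr]
    have h2 : (∫ ρ in (0:ℝ)..r, Real.sqrt (v₀ ρ - vmin)) =
        (∫ ρ in (0:ℝ)..a, Real.sqrt (v₀ ρ - vmin)) -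
          (∫ ρ in r..a, Real.sqrt (v₀ ρ - vmin)) := by
      rw [← intervalIntegral.integral_add_adjacent_intervals (hwint 0 r) (hwint r a)]
      ring
    have h3 : (∫ ρ in r..a, Real.sqrt (v₀ ρ - vmin)) ≤ (a - r) * M :=
      hbound r hr0.le hra.le
    have h4 : 0 ≤ ∫ ρ in r..a, Real.sqrt (v₀ ρ - vmin) :=
      intervalIntegral.integral_nonneg hra.le (fun ρ _ => Real.sqrt_nonneg _)
    rw [hT, habs]
    constructor <;> [nlinarith [h1, h2, h3]; nlinarith [h1, h2, h4]]
  -- scaling identity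
  have hscale : ∀ β : ℝ, 0 < β → ∀ b : ℝ,
      β * (∫ ρ in (0:ℝ)..b, Real.sqrt (ρ ^ 2 / 4 + β⁻¹ ^ 2 * (v₀ ρ - vmin))) =
      ∫ ρ in (0:ℝ)..b, Real.sqrt (β ^ 2 * ρ ^ 2 / 4 + (v₀ ρ - vmin)) := by
    intro β hβ b
    rw [← intervalIntegral.integral_const_mul]
    apply intervalIntegral.integral_congr
    intro ρ _
    show β * Real.sqrt (ρ ^ 2 / 4 + β⁻¹ ^ 2 * (v₀ ρ - vmin)) =
      Real.sqrt (β ^ 2 * ρ ^ 2 / 4 + (v₀ ρ - vmin))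
    have hβ2 : β ^ 2 * (ρ ^ 2 / 4 + β⁻¹ ^ 2 * (v₀ ρ - vmin)) =
        β ^ 2 * ρ ^ 2 / 4 + (v₀ ρ - vmin) := by
      field_simp
    rw [← hβ2, Real.sqrt_mul (sq_nonneg β), Real.sqrt_sq hβ.le]
  -- pointwise bounds for the scaled integrand
  have hglb : ∀ β b : ℝ, 0 ≤ b →
      (∫ ρ in (0:ℝ)..b, Real.sqrt (v₀ ρ - vmin)) ≤
      ∫ ρ in (0:ℝ)..b, Real.sqrt (β ^ 2 * ρ ^ 2 / 4 + (v₀ ρ - vmin)) := by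
    intro β b hb
    apply intervalIntegral.integral_mono_on hb (hwint 0 b) ((hgc β).intervalIntegrable 0 b)
    intro ρ _
    exact Real.sqrt_le_sqrt (by nlinarith [sq_nonneg (β * ρ)])
  have hgub : ∀ β : ℝ, 0 < β → ∀ b : ℝ, 0 ≤ b →
      (∫ ρ in (0:ℝ)..b, Real.sqrt (β ^ 2 * ρ ^ 2 / 4 + (v₀ ρ - vmin))) ≤
      (∫ ρ in (0:ℝ)..b, Real.sqrt (v₀ ρ - vmin)) + β * b ^ 2 / 4 := by
    intro β hβ b hb
    have key : (∫ ρ in (0:ℝ)..b, Real.sqrt (β ^ 2 * ρ ^ 2 / 4 + (v₀ ρ - vmin))) ≤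
        ∫ ρ in (0:ℝ)..b, (β * ρ / 2 + Real.sqrt (v₀ ρ - vmin)) := by
      apply intervalIntegral.integral_mono_on hb ((hgc β).intervalIntegrable 0 b)
        ((show Continuous (fun ρ : ℝ => β * ρ / 2 + Real.sqrt (v₀ ρ - vmin)) from
          ((continuous_const.mul continuous_id').div_const 2).add hwc).intervalIntegrable 0 b)
      intro ρ hρ
      have hρ0 : 0 ≤ ρ := hρ.1
      have hw0 : 0 ≤ v₀ ρ - vmin := by linarith [hmin ρ hρ0]
      have h1 : Real.sqrt (β ^ 2 * ρ ^ 2 / 4 + (v₀ ρ - vmin)) ≤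
          Real.sqrt (β ^ 2 * ρ ^ 2 / 4) + Real.sqrt (v₀ ρ - vmin) :=
        sqrt_add_le'' _ _ (by positivity) hw0
      have h2 : Real.sqrt (β ^ 2 * ρ ^ 2 / 4) = β * ρ / 2 := by
        rw [show β ^ 2 * ρ ^ 2 / 4 = (β * ρ / 2) ^ 2 by ring, Real.sqrt_sq (by positivity)]
      linarith
    have e : (∫ ρ in (0:ℝ)..b, (β * ρ / 2 + Real.sqrt (v₀ ρ - vmin))) =
        β * b ^ 2 / 4 + ∫ ρ in (0:ℝ)..b, Real.sqrt (v₀ ρ - vmin) := by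
      rw [intervalIntegral.integral_add
        ((show Continuous (fun ρ : ℝ => β * ρ / 2) from
          (continuous_const.mul continuous_id').div_const 2).intervalIntegrable 0 b)
        (hwint 0 b)]
      congr 1
      have : (∫ ρ in (0:ℝ)..b, β * ρ / 2) = (β / 2) * ∫ ρ in (0:ℝ)..b, ρ := by
        rw [← intervalIntegral.integral_const_mul]
        congr 1; funext ρ; ring
      rw [this, integral_id]
      ring
    linarith [key, le_of_eq e]
  -- description of the set and element value bounds
  set Sset : ℝ → Set ℝ := fun β => {x : ℝ | ∃ r ∈ Set.Ioo (0:ℝ) a,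
      x = L * r / 2 +
        (∫ ρ in (0:ℝ)..(L - r), Real.sqrt (ρ ^ 2 / 4 + β⁻¹ ^ 2 * (v₀ ρ - vmin))) +
        (∫ ρ in (0:ℝ)..r, Real.sqrt (ρ ^ 2 / 4 + β⁻¹ ^ 2 * (v₀ ρ - vmin)))} with hSset
  have hlowx : ∀ β : ℝ, 0 < β → ∀ x ∈ Sset β, T ≤ β * x := by
    intro β hβ x hx
    obtain ⟨r, hr, rfl⟩ := hx
    have hb1 : (0:ℝ) ≤ L - r := by have := hr.2; linarith
    have hb2 : (0:ℝ) ≤ r := hr.1.le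
    have e : β * (L * r / 2 +
        (∫ ρ in (0:ℝ)..(L - r), Real.sqrt (ρ ^ 2 / 4 + β⁻¹ ^ 2 * (v₀ ρ - vmin))) +
        (∫ ρ in (0:ℝ)..r, Real.sqrt (ρ ^ 2 / 4 + β⁻¹ ^ 2 * (v₀ ρ - vmin)))) =
        β * (L * r / 2) +
        (∫ ρ in (0:ℝ)..(L - r), Real.sqrt (β ^ 2 * ρ ^ 2 / 4 + (v₀ ρ - vmin))) +
        (∫ ρ in (0:ℝ)..r, Real.sqrt (β ^ 2 * ρ ^ 2 / 4 + (v₀ ρ - vmin))) := by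
      rw [← hscale β hβ (L - r), ← hscale β hβ r]; ring
    rw [e]
    have h1 := hglb β (L - r) hb1
    have h2 := hglb β r hb2
    have h3 := (hsum r hr).1
    have h4 : 0 ≤ β * (L * r / 2) := by positivity
    linarith
  have hupx : ∀ β : ℝ, 0 < β → ∀ r ∈ Set.Ioo (0:ℝ) a,
      β * (L * r / 2 +
        (∫ ρ in (0:ℝ)..(L - r), Real.sqrt (ρ ^ 2 / 4 + β⁻¹ ^ 2 * (v₀ ρ - vmin))) +
        (∫ ρ in (0:ℝ)..r, Real.sqrt (ρ ^ 2 / 4 + β⁻¹ ^ 2 * (v₀ ρ - vmin)))) ≤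
        T + (a - r) * M + β * L ^ 2 := by
    intro β hβ r hr
    have hb1 : (0:ℝ) ≤ L - r := by have := hr.2; linarith
    have hb2 : (0:ℝ) ≤ r := hr.1.le
    have e : β * (L * r / 2 +
        (∫ ρ in (0:ℝ)..(L - r), Real.sqrt (ρ ^ 2 / 4 + β⁻¹ ^ 2 * (v₀ ρ - vmin))) +
        (∫ ρ in (0:ℝ)..r, Real.sqrt (ρ ^ 2 / 4 + β⁻¹ ^ 2 * (v₀ ρ - vmin)))) =
        β * (L * r / 2) +
        (∫ ρ in (0:ℝ)..(L - r), Real.sqrt (β ^ 2 * ρ ^ 2 / 4 + (v₀ ρ - vmin))) +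
        (∫ ρ in (0:ℝ)..r, Real.sqrt (β ^ 2 * ρ ^ 2 / 4 + (v₀ ρ - vmin))) := by
      rw [← hscale β hβ (L - r), ← hscale β hβ r]; ring
    rw [e]
    have h1 := hgub β hβ (L - r) hb1
    have h2 := hgub β hβ r hb2
    have h3 := (hsum r hr).2
    have hrL : r ≤ L := by have := hr.2; linarith
    have hc : β * (L * r / 2) + β * (L - r) ^ 2 / 4 + β * r ^ 2 / 4 ≤ β * L ^ 2 := by
      have h5 : L * r / 2 + (L - r) ^ 2 / 4 + r ^ 2 / 4 ≤ L ^ 2 := by nlinarith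
      nlinarith
    linarith
  -- nonempty, bddBelow
  have hne : ∀ β : ℝ, (Sset β).Nonempty := by
    intro β
    exact ⟨_, ⟨a / 2, ⟨by linarith, by linarith⟩, rfl⟩⟩
  have hbdd : ∀ β : ℝ, 0 < β → BddBelow (Sset β) := by
    intro β hβ
    refine ⟨T / β, fun x hx => ?_⟩
    rw [div_le_iff₀ hβ]
    have := hlowx β hβ x hx
    linarith [this, mul_comm β x]
  -- main bounds on β * Sβ β
  have hlow : ∀ β : ℝ, 0 < β → T ≤ β * Sβ β := by
    intro β hβ
    rw [hSβ β]
    have h : T / β ≤ sInf (Sset β) := by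
      apply le_csInf (hne β)
      intro x hx
      rw [div_le_iff₀ hβ]
      have := hlowx β hβ x hx
      linarith [mul_comm β x]
    calc T = β * (T / β) := by field_simp
      _ ≤ β * sInf (Sset β) := by
          exact mul_le_mul_of_nonneg_left h hβ.le
  have hup : ∀ β : ℝ, 0 < β → β * Sβ β ≤ T + β * L ^ 2 := by
    intro β hβ
    apply le_of_forall_pos_le_add
    intro ε hε
    set r : ℝ := max (a / 2) (a - ε / (M + 1)) with hrdef
    have hr0 : 0 < r := lt_of_lt_of_le (by linarith) (le_max_left _ _)
    have hra : r < a := max_lt (by linarith) (by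
      have : 0 < ε / (M + 1) := by positivity
      linarith)
    have hrmem : r ∈ Set.Ioo (0:ℝ) a := ⟨hr0, hra⟩
    have har : a - r ≤ ε / (M + 1) := by
      have : a - ε / (M + 1) ≤ r := le_max_right _ _
      linarith
    have hMε : (a - r) * M ≤ ε := by
      have h1 : (a - r) * M ≤ ε / (M + 1) * M :=
        mul_le_mul_of_nonneg_right har hM0
      have h2 : ε / (M + 1) * M ≤ ε := by
        rw [div_mul_eq_mul_div, div_le_iff₀ (by linarith)]
        nlinarith
      linarith
    have hmem : (L * r / 2 +
        (∫ ρ in (0:ℝ)..(L - r), Real.sqrt (ρ ^ 2 / 4 + β⁻¹ ^ 2 * (v₀ ρ - vmin))) +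
        (∫ ρ in (0:ℝ)..r, Real.sqrt (ρ ^ 2 / 4 + β⁻¹ ^ 2 * (v₀ ρ - vmin)))) ∈ Sset β :=
      ⟨r, hrmem, rfl⟩
    have hle : Sβ β ≤ L * r / 2 +
        (∫ ρ in (0:ℝ)..(L - r), Real.sqrt (ρ ^ 2 / 4 + β⁻¹ ^ 2 * (v₀ ρ - vmin))) +
        (∫ ρ in (0:ℝ)..r, Real.sqrt (ρ ^ 2 / 4 + β⁻¹ ^ 2 * (v₀ ρ - vmin))) := by
      rw [hSβ β]
      exact csInf_le (hbdd β hβ) hmem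
    have := hupx β hβ r hrmem
    have hmul := mul_le_mul_of_nonneg_left hle hβ.le
    linarith
  constructor
  · -- squeeze
    have hTend : Tendsto (fun β : ℝ => T + β * L ^ 2) (nhdsWithin 0 (Set.Ioi 0)) (nhds T) := by
      have hc : Tendsto (fun β : ℝ => T + β * L ^ 2) (nhds 0) (nhds (T + 0 * L ^ 2)) :=
        (continuous_const.add ((continuous_id.mul continuous_const))).tendsto 0
      simpa using hc.mono_left nhdsWithin_le_nhds
    refine tendsto_of_tendsto_of_tendsto_of_le_of_le' tendsto_const_nhds hTend ?_ ?_
    · exact Filter.eventually_of_mem self_mem_nhdsWithin (fun β hβ => hlow β hβ)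
    · exact Filter.eventually_of_mem self_mem_nhdsWithin (fun β hβ => hup β hβ)
  · -- the equality
    have haL2 : a ≤ L / 2 := by linarith
    have e1 : (∫ ρ in (0:ℝ)..(L / 2), Real.sqrt (v₀ ρ - vmin)) =
        (∫ ρ in (0:ℝ)..a, Real.sqrt (v₀ ρ - vmin)) + (L / 2 - a) * M := by
      rw [← intervalIntegral.integral_add_adjacent_intervals (hwint 0 a) (hwint a (L / 2)),
        hconst (L / 2) haL2]
    rw [e1, hT, habs, hMdef]
    ring
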